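/- Let Ȟ ∈ Ǎ and let x ∈ Hom_R(RΛ_S,ℝ) be a point with x ∈ Ȟ (viewing Hom_R(RΛ_S,ℝ) ⊆ Hom_ℤ(RΛ_S,ℝ)) and x ∈ T := ∪_{w∈W} w·C. Then there exists H ∈ A with x ∈ H. -/

import Mathlib

open scoped BigOperators

noncomputable section

/-- Data of a fusion ring structure on a ring `R`, with `ℤ`-basis indexed by `ι`. -/
structure FusionData (R : Type*) [Ring R] (ι : Type*) [Fintype ι] [DecidableEq ι] where
  /-- the distinguished basis -/
  b : Module.Basis ι ℤ R
  /-- the index of the unit -/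
  unit : ι
  b_unit : b unit = 1
  basis_mul_ne_zero : ∀ j k, b j * b k ≠ 0
  c_nonneg : ∀ j k i, 0 ≤ b.repr (b j * b k) i
  /-- the involution on the index set -/
  inv : ι → ι
  inv_invol : ∀ j, inv (inv j) = j
  /-- the `ℤ`-linear extension of the involution -/
  star : R →+ R
  star_basis : ∀ j, star (b j) = b (inv j)
  star_mul : ∀ x y, star (x * y) = star y * star x
  c_unit_iff : ∀ j k, b.repr (b j * b k) unit = 1 ↔ k = inv j

namespace FusionData

variable {R : Type*} [Ring R] {ι : Type*} [Fintype ι] [DecidableEq ι]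

/-- The structure constants of a fusion ring. -/
def c (F : FusionData R ι) (j k i : ι) : ℤ := F.b.repr (F.b j * F.b k) i

/-- Nonnegativity of an element of a fusion ring: all basis coefficients are nonnegative. -/
def nonneg (F : FusionData R ι) (r : R) : Prop := ∀ i, 0 ≤ F.b.repr r i

end FusionData

/-- The basis vector `α_s` of the free module `S → R`. -/
def simRoot (R : Type*) [Ring R] {S : Type*} [DecidableEq S] (s : S) : S → R :=
  Pi.single s 1

/-- A geometric realisation of the Coxeter system `(W, S)` over a fusion ring `R`,
together with a Frobenius–Perron dimension homomorphism. -/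
structure GeomSetting (R : Type*) [Ring R] (ι : Type*) [Fintype ι] [DecidableEq ι]
    (S : Type*) [Fintype S] [DecidableEq S] (W : Type*) [Group W] where
  /-- the fusion ring structure on `R` -/
  FD : FusionData R ι
  /-- the Coxeter matrix (`0` denotes `∞`) -/
  M : CoxeterMatrix S
  /-- the Coxeter system -/
  cs : CoxeterSystem M W
  /-- the Frobenius–Perron dimension -/
  FP : R →+* ℝ
  FP_basis : ∀ i, 1 ≤ FP (FD.b i)
  FP_star : ∀ r, FP (FD.star r) = FP r
  /-- the sesquilinear form on `RΛ_S = S → R` -/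
  B : (S → R) → (S → R) → R
  B_add_left : ∀ u u' v, B (u + u') v = B u v + B u' v
  B_add_right : ∀ u v v', B u (v + v') = B u v + B u v'
  B_sesq : ∀ (x y : R) (s t : S),
    B (x • simRoot R s) (y • simRoot R t)
      = y * B (simRoot R s) (simRoot R t) * FD.star x
  cartan_diag : ∀ s, B (simRoot R s) (simRoot R s) = 2
  cartan_nonneg : ∀ s t, s ≠ t →
    FD.nonneg (-(B (simRoot R s) (simRoot R t)))
  cartan_star : ∀ s t, s ≠ t →
    B (simRoot R t) (simRoot R s)
      = FD.star (B (simRoot R s) (simRoot R t))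
  cartan_fin : ∀ s t, s ≠ t → M s t ≠ 0 →
    FP (B (simRoot R s) (simRoot R t))
      = -2 * Real.cos (Real.pi / (M s t : ℝ))
  cartan_inf : ∀ s t, s ≠ t → M s t = 0 →
    FP (B (simRoot R s) (simRoot R t)) ≤ -2
  /-- the left `R`-linear action of `W` on `RΛ_S` -/
  rep : W →* ((S → R) ≃ₗ[R] (S → R))
  rep_simple : ∀ (s : S) (v : S → R),
    rep (cs.simple s) v = v - B (simRoot R s) v • simRoot R s

namespace GeomSetting

variable {R : Type*} [Ring R] {ι : Type*} [Fintype ι] [DecidableEq ι]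
  {S : Type*} [Fintype S] [DecidableEq S] {W : Type*} [Group W]

/-- The Cartan matrix `r_{s,t}` of the realisation. -/
def cartan (G : GeomSetting R ι S W) (s t : S) : R :=
  G.B (simRoot R s) (simRoot R t)

/-- The unfolded (integral) Cartan matrix `ř`. -/
def rcheck (G : GeomSetting R ι S W) (p q : ι × S) : ℤ :=
  if p.2 = q.2 then (if p.1 = q.1 then 2 else 0)
  else G.FD.b.repr (G.FD.b q.1 * G.cartan p.2 q.2) p.1

/-- The unfolded Coxeter matrix `m̌` (`0` denotes `∞`). -/
def mcheck (G : GeomSetting R ι S W) (p q : ι × S) : ℕ :=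
  if p = q then 1
  else if G.rcheck p q = 0 then 2
  else if G.rcheck p q = -1 then 3
  else 0

/-- The Coxeter relations of the unfolded Coxeter system. -/
def rels (G : GeomSetting R ι S W) : Set (FreeGroup (ι × S)) :=
  Set.range fun pq : (ι × S) × (ι × S) =>
    (FreeGroup.of pq.1 * FreeGroup.of pq.2) ^ G.mcheck pq.1 pq.2

/-- The unfolded Coxeter group `W̌`. -/
def Wcheck (G : GeomSetting R ι S W) : Type _ := PresentedGroup G.rels

instance (G : GeomSetting R ι S W) : Group G.Wcheck :=
  QuotientGroup.Quotient.group _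

/-- The generators `(b, s)` of the unfolded Coxeter group. -/
def gen (G : GeomSetting R ι S W) (p : ι × S) : G.Wcheck := PresentedGroup.of p

end GeomSetting


section Hyperplanes

variable {X : Type*} {G : Type*} [Group G]

/-- The closed fundamental cone in coordinates. -/
def coneC (X : Type*) : Set (X → ℝ) := {Z | ∀ x, 0 ≤ Z x}

/-- The open fundamental cone in coordinates. -/
def coneCo (X : Type*) : Set (X → ℝ) := {Z | ∀ x, 0 < Z x}

/-- The coordinate hyperplane (wall) at `x`. -/
def wallH (X : Type*) (x : X) : Set (X → ℝ) := {Z | Z x = 0}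

/-- The Tits cone of an action given in coordinates on the dual space. -/
def titsT (rho : G →* ((X → ℝ) ≃ₗ[ℝ] (X → ℝ))) : Set (X → ℝ) :=
  ⋃ g : G, rho g '' coneC X

/-- The hyperplane system of an action. -/
def hypSys (rho : G →* ((X → ℝ) ≃ₗ[ℝ] (X → ℝ))) : Set (Set (X → ℝ)) :=
  {H | ∃ (g : G) (x : X), H = rho g '' wallH X x}

/-- The complexified hyperplane complement. -/
def omegaReg (rho : G →* ((X → ℝ) ≃ₗ[ℝ] (X → ℝ))) : Set ((X → ℝ) × (X → ℝ)) :=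
  (interior (titsT rho) ×ˢ interior (titsT rho)) \ ⋃ H ∈ hypSys rho, H ×ˢ H

end Hyperplanes

/-- The embedding `Hom_R(RΛ_S, ℝ) → Hom_ℤ(RΛ_S, ℝ)` in coordinates:
`Z(α_s) ↦ (Z(b_i · α_s))_{(i,s)} = (FPdim(b_i) · Z(α_s))_{(i,s)}`. -/
def GeomSetting.emb {R : Type*} [Ring R] {ι : Type*} [Fintype ι] [DecidableEq ι]
    {S : Type*} [Fintype S] [DecidableEq S] {W : Type*} [Group W]
    (G : GeomSetting R ι S W) (Z : S → ℝ) : (ι × S) → ℝ :=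
  fun p => G.FP (G.FD.b p.1) * Z p.2

variable {R : Type*} [Ring R] {ι : Type*} [Fintype ι] [DecidableEq ι]
  {S : Type*} [Fintype S] [DecidableEq S] {W : Type*} [Group W]


section AuxDev
variable {R : Type*} [Ring R] {ι : Type*} [Fintype ι] [DecidableEq ι]
  {S : Type*} [Fintype S] [DecidableEq S] {W : Type*} [Group W]

/-- Left multiplication by a basis element preserves nonnegativity of coefficients. -/
lemma FusionData.repr_mul_nonneg (F : FusionData R ι) {x : R} (hx : F.nonneg x) (i j : ι) :
    0 ≤ F.b.repr (F.b i * x) j := by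
  have hxe : F.b i * x = ∑ k, F.b.repr x k • (F.b i * F.b k) := by
    have : ∑ k, F.b.repr x k • (F.b i * F.b k) = F.b i * ∑ k, F.b.repr x k • F.b k := by
      rw [Finset.mul_sum]
      exact Finset.sum_congr rfl fun k _ => (mul_smul_comm _ _ _).symm
    rw [this, F.b.sum_repr]
  rw [hxe, map_sum, Finset.sum_apply']
  refine Finset.sum_nonneg fun k _ => ?_
  rw [map_smul, Finsupp.smul_apply, smul_eq_mul]
  exact mul_nonneg (hx k) (F.c_nonneg i k j)

namespace GeomSetting

variable (G : GeomSetting R ι S W)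

lemma rcheck_diag (p : ι × S) : G.rcheck p p = 2 := by simp [rcheck]

lemma rcheck_of_ne_same {p q : ι × S} (hne : p ≠ q) (h2 : p.2 = q.2) : G.rcheck p q = 0 := by
  have h1 : p.1 ≠ q.1 := fun h => hne (Prod.ext h h2)
  simp [rcheck, h2, h1]

lemma rcheck_nonpos {p q : ι × S} (hne : p ≠ q) : G.rcheck p q ≤ 0 := by
  by_cases h2 : p.2 = q.2
  · rw [G.rcheck_of_ne_same hne h2]
  · have hc := G.cartan_nonneg p.2 q.2 h2
    have : G.FD.b q.1 * G.cartan p.2 q.2 = -(G.FD.b q.1 * -(G.cartan p.2 q.2)) := by rw [mul_neg, neg_neg]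
    rw [GeomSetting.rcheck, if_neg h2, this, map_neg, Finsupp.neg_apply, neg_nonpos]
    exact G.FD.repr_mul_nonneg hc q.1 p.1

lemma mcheck_diag (p : ι × S) : G.mcheck p p = 1 := by simp [mcheck]

/-- The Coxeter relations hold in the unfolded group. -/
lemma gen_mul_gen_pow (p q : ι × S) : (G.gen p * G.gen q) ^ G.mcheck p q = 1 := by
  have h : (FreeGroup.of p * FreeGroup.of q) ^ G.mcheck p q ∈ G.rels := ⟨(p, q), rfl⟩
  have h1 : (PresentedGroup.mk G.rels ((FreeGroup.of p * FreeGroup.of q) ^ G.mcheck p q)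
      : G.Wcheck) = 1 :=
    (QuotientGroup.eq_one_iff _).mpr (Subgroup.subset_normalClosure h)
  rw [map_pow, map_mul] at h1
  exact h1

lemma gen_mul_gen_self (p : ι × S) : G.gen p * G.gen p = 1 := by
  have := G.gen_mul_gen_pow p p
  rwa [G.mcheck_diag, pow_one] at this

lemma gen_inv (p : ι × S) : (G.gen p)⁻¹ = G.gen p :=
  (eq_inv_of_mul_eq_one_right (G.gen_mul_gen_self p)).symm

end GeomSetting
end AuxDev
section AuxDev2
variable {R : Type*} [Ring R] {ι : Type*} [Fintype ι] [DecidableEq ι]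
  {S : Type*} [Fintype S] [DecidableEq S] {W : Type*} [Group W]

namespace GeomSetting
variable (G : GeomSetting R ι S W)
  (rhoF : G.Wcheck →* (((ι × S) → ℝ) ≃ₗ[ℝ] ((ι × S) → ℝ)))
  (hrhoF : ∀ (p : ι × S) (Z : (ι × S) → ℝ) (q : ι × S),
    rhoF (G.gen p) Z q = Z q - (G.rcheck p q : ℝ) * Z p)

include hrhoF

lemma rcheck_symm_zero {p q : ι × S} (hne : p ≠ q) (ha : G.rcheck p q = 0) :
    G.rcheck q p = 0 := by
  have hm : G.mcheck p q = 2 := by simp [GeomSetting.mcheck, hne, ha]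
  have hrel : (G.gen p * G.gen q) ^ 2 = 1 := by rw [← hm]; exact G.gen_mul_gen_pow p q
  have happ : ∀ (g h : G.Wcheck) (Y : (ι × S) → ℝ), rhoF (g * h) Y = rhoF g (rhoF h Y) :=
    fun g h Y => by rw [map_mul]; rfl
  set b : ℝ := (G.rcheck q p : ℝ) with hb
  set Z0 : (ι × S) → ℝ := fun r => if r = q then 1 else 0 with hZ0
  have hZ0p : Z0 p = 0 := by simp [hZ0, hne]
  have hZ0q : Z0 q = 1 := by simp [hZ0]
  set Z1 := rhoF (G.gen q) Z0 with hZ1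
  have h1p : Z1 p = -b := by rw [hZ1, hrhoF, hZ0p, hZ0q]; ring
  have h1q : Z1 q = -1 := by rw [hZ1, hrhoF, G.rcheck_diag, hZ0q]; push_cast; ring
  set Z2 := rhoF (G.gen p) Z1 with hZ2
  have h2p : Z2 p = b := by rw [hZ2, hrhoF, G.rcheck_diag, h1p]; push_cast; ring
  have h2q : Z2 q = -1 := by rw [hZ2, hrhoF, h1q, h1p, ha]; push_cast; ring
  set Z3 := rhoF (G.gen q) Z2 with hZ3
  have h3p : Z3 p = 2 * b := by rw [hZ3, hrhoF, h2p, h2q, ← hb]; ring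
  have h3q : Z3 q = 1 := by rw [hZ3, hrhoF, G.rcheck_diag, h2q]; push_cast; ring
  set Z4 := rhoF (G.gen p) Z3 with hZ4
  have h4p : Z4 p = -2 * b := by rw [hZ4, hrhoF, G.rcheck_diag, h3p]; push_cast; ring
  have key : Z4 = Z0 := by
    rw [hZ4, hZ3, hZ2, hZ1, ← happ, ← happ, ← happ,
      show G.gen p * G.gen q * G.gen p * G.gen q = (G.gen p * G.gen q) ^ 2 by
        simp only [pow_succ, pow_zero, one_mul, mul_assoc], hrel, map_one]
    rfl
  have : (-2 : ℝ) * b = 0 := by rw [← h4p, key, hZ0p]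
  have hb0 : (G.rcheck q p : ℝ) = 0 := by rw [← hb]; linarith
  exact_mod_cast hb0

lemma rcheck_symm_negone {p q : ι × S} (hne : p ≠ q) (ha : G.rcheck p q = -1) :
    G.rcheck q p = -1 := by
  have hm : G.mcheck p q = 3 := by simp [GeomSetting.mcheck, hne, ha]
  have hrel : (G.gen p * G.gen q) ^ 3 = 1 := by rw [← hm]; exact G.gen_mul_gen_pow p q
  have happ : ∀ (g h : G.Wcheck) (Y : (ι × S) → ℝ), rhoF (g * h) Y = rhoF g (rhoF h Y) :=
    fun g h Y => by rw [map_mul]; rfl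
  have ha' : (G.rcheck p q : ℝ) = -1 := by exact_mod_cast ha
  set b : ℝ := (G.rcheck q p : ℝ) with hb
  set Z0 : (ι × S) → ℝ := fun r => if r = p then 1 else 0 with hZ0
  have hZ0p : Z0 p = 1 := by simp [hZ0]
  have hZ0q : Z0 q = 0 := by simp [hZ0, hne.symm]
  set Z1 := rhoF (G.gen q) Z0 with hZ1
  have h1p : Z1 p = 1 := by rw [hZ1, hrhoF, hZ0p, hZ0q]; ring
  have h1q : Z1 q = 0 := by rw [hZ1, hrhoF, G.rcheck_diag, hZ0q]; push_cast; ring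
  set Z2 := rhoF (G.gen p) Z1 with hZ2
  have h2p : Z2 p = -1 := by rw [hZ2, hrhoF, G.rcheck_diag, h1p]; push_cast; ring
  have h2q : Z2 q = 1 := by rw [hZ2, hrhoF, h1q, h1p, ha']; ring
  set Z3 := rhoF (G.gen q) Z2 with hZ3
  have h3p : Z3 p = -1 - b := by rw [hZ3, hrhoF, h2p, h2q, ← hb]; ring
  have h3q : Z3 q = -1 := by rw [hZ3, hrhoF, G.rcheck_diag, h2q]; push_cast; ring
  set Z4 := rhoF (G.gen p) Z3 with hZ4
  have h4p : Z4 p = 1 + b := by rw [hZ4, hrhoF, G.rcheck_diag, h3p]; push_cast; ring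
  have h4q : Z4 q = -2 - b := by rw [hZ4, hrhoF, h3q, h3p, ha']; ring
  set Z5 := rhoF (G.gen q) Z4 with hZ5
  have h5p : Z5 p = 1 + 3 * b + b ^ 2 := by rw [hZ5, hrhoF, h4p, h4q, ← hb]; ring
  have h5q : Z5 q = 2 + b := by rw [hZ5, hrhoF, G.rcheck_diag, h4q]; push_cast; ring
  set Z6 := rhoF (G.gen p) Z5 with hZ6
  have h6p : Z6 p = -(1 + 3 * b + b ^ 2) := by
    rw [hZ6, hrhoF, G.rcheck_diag, h5p]; push_cast; ring
  have h6q : Z6 q = b ^ 2 + 4 * b + 3 := by rw [hZ6, hrhoF, h5q, h5p, ha']; ring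
  have key : Z6 = Z0 := by
    rw [hZ6, hZ5, hZ4, hZ3, hZ2, hZ1, ← happ, ← happ, ← happ, ← happ, ← happ,
      show G.gen p * G.gen q * G.gen p * G.gen q * G.gen p * G.gen q =
        (G.gen p * G.gen q) ^ 3 by
        simp only [pow_succ, pow_zero, one_mul, mul_assoc], hrel, map_one]
    rfl
  have e1 : -(1 + 3 * b + b ^ 2) = 1 := by rw [← h6p, key, hZ0p]
  have e2 : b ^ 2 + 4 * b + 3 = 0 := by rw [← h6q, key, hZ0q]
  have hbv : (G.rcheck q p : ℝ) = -1 := by rw [← hb]; linarith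
  exact_mod_cast hbv

lemma rcheck_cases {p q : ι × S} (hne : p ≠ q) :
    (G.rcheck p q = 0 ∧ G.rcheck q p = 0) ∨ (G.rcheck p q = -1 ∧ G.rcheck q p = -1) ∨
    (G.rcheck p q ≤ -2 ∧ G.rcheck q p ≤ -2) := by
  have hpq := G.rcheck_nonpos hne
  have hqp := G.rcheck_nonpos hne.symm
  rcases eq_or_ne (G.rcheck p q) 0 with h0 | h0
  · exact Or.inl ⟨h0, G.rcheck_symm_zero rhoF hrhoF hne h0⟩
  rcases eq_or_ne (G.rcheck p q) (-1) with h1 | h1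
  · exact Or.inr (Or.inl ⟨h1, G.rcheck_symm_negone rhoF hrhoF hne h1⟩)
  refine Or.inr (Or.inr ⟨by omega, ?_⟩)
  rcases eq_or_ne (G.rcheck q p) 0 with g0 | g0
  · exact absurd (G.rcheck_symm_zero rhoF hrhoF hne.symm g0) h0
  rcases eq_or_ne (G.rcheck q p) (-1) with g1 | g1
  · exact absurd (G.rcheck_symm_negone rhoF hrhoF hne.symm g1) h1
  omega

lemma mcheck_symm (p q : ι × S) : G.mcheck p q = G.mcheck q p := by
  rcases eq_or_ne p q with rfl | hne
  · rfl
  rcases G.rcheck_cases rhoF hrhoF hne with ⟨h1, h2⟩ | ⟨h1, h2⟩ | ⟨h1, h2⟩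
  · simp [GeomSetting.mcheck, hne, hne.symm, h1, h2]
  · simp [GeomSetting.mcheck, hne, hne.symm, h1, h2]
  · have n1 : G.rcheck p q ≠ 0 := by omega
    have n2 : G.rcheck p q ≠ -1 := by omega
    have n3 : G.rcheck q p ≠ 0 := by omega
    have n4 : G.rcheck q p ≠ -1 := by omega
    simp [GeomSetting.mcheck, hne, hne.symm, n1, n2, n3, n4]

omit hrhoF in
lemma mcheck_off {p q : ι × S} (hne : p ≠ q) : G.mcheck p q ≠ 1 := by
  unfold GeomSetting.mcheck
  split_ifs <;> simp_all

end GeomSetting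
end AuxDev2
section AuxDev3
open CoxeterSystem
variable {R : Type*} [Ring R] {ι : Type*} [Fintype ι] [DecidableEq ι]
  {S : Type*} [Fintype S] [DecidableEq S] {W : Type*} [Group W]

namespace GeomSetting
variable (G : GeomSetting R ι S W)
  (rhoF : G.Wcheck →* (((ι × S) → ℝ) ≃ₗ[ℝ] ((ι × S) → ℝ)))
  (hrhoF : ∀ (p : ι × S) (Z : (ι × S) → ℝ) (q : ι × S),
    rhoF (G.gen p) Z q = Z q - (G.rcheck p q : ℝ) * Z p)
  {M2 : CoxeterMatrix (ι × S)} (cs2 : CoxeterSystem M2 G.Wcheck)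
  (hsimple : ∀ p : ι × S, cs2.simple p = G.gen p)
  (hM2 : ∀ p q : ι × S, M2 p q = G.mcheck p q)

lemma rho_mul_apply (g h : G.Wcheck) (Y : (ι × S) → ℝ) :
    rhoF (g * h) Y = rhoF g (rhoF h Y) := by rw [map_mul]; rfl

include hrhoF hsimple hM2 in
lemma dihedral (p t : ι × S) (hne : p ≠ t) (k : ℕ)
    (hred : cs2.length (cs2.wordProd (alternatingWord t p (k + 1))) = k + 1) :
    ∃ c d : ℝ, 0 ≤ c ∧ 0 ≤ d ∧ 1 ≤ c + d ∧
      ∀ Z : (ι × S) → ℝ,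
        rhoF (cs2.wordProd (alternatingWord p t k))⁻¹ Z p = c * Z p + d * Z t := by
  have hisred : cs2.IsReduced (alternatingWord t p (k + 1)) := by
    rw [CoxeterSystem.IsReduced, hred, length_alternatingWord]
  have hbound : M2 t p ≠ 0 → k + 1 ≤ M2 t p := by
    intro hM0
    by_contra hgt
    exact cs2.not_isReduced_alternatingWord t p hM0 (by omega) hisred
  -- the three base computations
  have base0 : ∀ Z : (ι × S) → ℝ,
      rhoF (cs2.wordProd (alternatingWord p t 0))⁻¹ Z p = 1 * Z p + 0 * Z t := by
    intro Z
    show rhoF (cs2.wordProd [])⁻¹ Z p = _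
    rw [cs2.wordProd_nil, inv_one, map_one]
    show Z p = _; ring
  have hw1 : alternatingWord p t 1 = [t] := rfl
  have base1 : ∀ Z : (ι × S) → ℝ,
      rhoF (cs2.wordProd (alternatingWord p t 1))⁻¹ Z p
        = Z p - (G.rcheck t p : ℝ) * Z t := by
    intro Z
    rw [hw1, cs2.wordProd_singleton, hsimple, G.gen_inv, hrhoF]
  rcases G.rcheck_cases rhoF hrhoF hne with ⟨ha, hb⟩ | ⟨ha, hb⟩ | ⟨ha, hb⟩
  · -- commuting case : m = 2
    have hM : M2 t p = 2 := by
      rw [hM2]; simp [GeomSetting.mcheck, hne.symm, hb]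
    have hk : k ≤ 1 := by have := hbound (by omega); omega
    interval_cases k
    · exact ⟨1, 0, by norm_num, by norm_num, by norm_num, base0⟩
    · refine ⟨1, 0, by norm_num, by norm_num, by norm_num, fun Z => ?_⟩
      rw [base1 Z, hb]; push_cast; ring
  · -- braid case : m = 3
    have hM : M2 t p = 3 := by
      rw [hM2]; simp [GeomSetting.mcheck, hne.symm, hb]
    have hk : k ≤ 2 := by have := hbound (by omega); omega
    interval_cases k
    · exact ⟨1, 0, by norm_num, by norm_num, by norm_num, base0⟩
    · refine ⟨1, 1, by norm_num, by norm_num, by norm_num, fun Z => ?_⟩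
      rw [base1 Z, hb]; push_cast; ring
    · refine ⟨0, 1, by norm_num, by norm_num, by norm_num, fun Z => ?_⟩
      have hw2 : alternatingWord p t 2 = [p, t] := rfl
      rw [hw2]
      have : cs2.wordProd [p, t] = G.gen p * G.gen t := by
        rw [cs2.wordProd_cons, cs2.wordProd_singleton, hsimple, hsimple]
      rw [this, mul_inv_rev, G.gen_inv, G.gen_inv, rho_mul_apply G rhoF, hrhoF]
      rw [hrhoF, hrhoF, G.rcheck_diag, ha, hb]
      push_cast; ring
  · -- infinite case
    have ha' : (G.rcheck p t : ℝ) ≤ -2 := by exact_mod_cast ha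
    have hb' : (G.rcheck t p : ℝ) ≤ -2 := by exact_mod_cast hb
    clear hred hisred hbound
    have main : ∀ m : ℕ, ∃ c d : ℝ, 0 ≤ c ∧ 0 ≤ d ∧ 1 ≤ c + d ∧
        (Even m → d ≤ c) ∧ (¬ Even m → c ≤ d) ∧
        ∀ Z : (ι × S) → ℝ,
          rhoF (cs2.wordProd (alternatingWord p t m))⁻¹ Z p = c * Z p + d * Z t := by
      intro m
      induction m with
      | zero =>
        exact ⟨1, 0, by norm_num, by norm_num, by norm_num, fun _ => by norm_num,
          fun h => absurd Even.zero h, base0⟩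
      | succ m ih =>
        obtain ⟨c, d, hc, hd, hcd, hev, hodd, hval⟩ := ih
        have hsucc : alternatingWord p t (m + 1)
            = (if Even m then t else p) :: alternatingWord p t m :=
          alternatingWord_succ' p t m
        by_cases hm : Even m
        · -- prepend t
          refine ⟨c, -(G.rcheck t p : ℝ) * c - d, hc, ?_, ?_, ?_, ?_, ?_⟩
          · nlinarith [hev hm]
          · nlinarith [hev hm]
          · intro h; exact absurd h (by simp [Nat.even_add_one, hm])
          · intro _; nlinarith [hev hm]
          · intro Z
            rw [hsucc, if_pos hm, cs2.wordProd_cons, hsimple, mul_inv_rev, G.gen_inv,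
              rho_mul_apply G rhoF, hval, hrhoF, hrhoF, G.rcheck_diag]
            push_cast; ring
        · -- prepend p
          refine ⟨-(G.rcheck p t : ℝ) * d - c, d, ?_, hd, ?_, ?_, ?_, ?_⟩
          · nlinarith [hodd hm]
          · nlinarith [hodd hm]
          · intro _; nlinarith [hodd hm]
          · intro h; exact absurd (Nat.even_add_one.mpr hm) h
          · intro Z
            rw [hsucc, if_neg hm, cs2.wordProd_cons, hsimple, mul_inv_rev, G.gen_inv,
              rho_mul_apply G rhoF, hval, hrhoF, hrhoF, G.rcheck_diag]
            push_cast; ring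
    obtain ⟨c, d, hc, hd, hcd, _, _, hval⟩ := main k
    exact ⟨c, d, hc, hd, hcd, hval⟩

end GeomSetting
end AuxDev3
section AuxDev4
open CoxeterSystem
variable {R : Type*} [Ring R] {ι : Type*} [Fintype ι] [DecidableEq ι]
  {S : Type*} [Fintype S] [DecidableEq S] {W : Type*} [Group W]

namespace GeomSetting
variable (G : GeomSetting R ι S W)
  (rhoF : G.Wcheck →* (((ι × S) → ℝ) ≃ₗ[ℝ] ((ι × S) → ℝ)))
  (hrhoF : ∀ (p : ι × S) (Z : (ι × S) → ℝ) (q : ι × S),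
    rhoF (G.gen p) Z q = Z q - (G.rcheck p q : ℝ) * Z p)
  {M2 : CoxeterMatrix (ι × S)} (cs2 : CoxeterSystem M2 G.Wcheck)
  (hsimple : ∀ p : ι × S, cs2.simple p = G.gen p)
  (hM2 : ∀ p q : ι × S, M2 p q = G.mcheck p q)

include hrhoF hsimple hM2 in
/-- Main positivity statement: if `ℓ(w·s_p) > ℓ(w)` then the "root" `w(α_p)` pairs strictly
positively with every strictly positive functional. -/
lemma posS : ∀ n : ℕ, ∀ w : G.Wcheck, ∀ p : ι × S, cs2.length w = n →
    cs2.length (w * G.gen p) = n + 1 →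
    ∀ Z : (ι × S) → ℝ, (∀ q, 0 < Z q) → 0 < rhoF w⁻¹ Z p := by
  -- normalized length dichotomy
  have hms : ∀ (v : G.Wcheck) (c : ι × S), cs2.length (v * G.gen c) = cs2.length v + 1 ∨
      cs2.length (v * G.gen c) + 1 = cs2.length v := by
    intro v c
    have h1 := cs2.length_mul_simple v c
    have h2 := cs2.length_mul_simple_ne v c
    rw [hsimple] at h1 h2
    omega
  intro n
  induction n using Nat.strong_induction_on with
  | _ n ih =>
    intro w p hw hwp Z hZ
    rcases Nat.eq_zero_or_pos n with hn0 | hn0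
    · have hw1 : w = 1 := cs2.length_eq_zero_iff.mp (by omega)
      subst hw1
      rw [inv_one, map_one]
      exact hZ p
    have hw1 : w ≠ 1 := by
      intro h; rw [h, cs2.length_one] at hw; omega
    obtain ⟨t, ht⟩ := cs2.exists_rightDescent_of_ne_one hw1
    rw [CoxeterSystem.IsRightDescent, hsimple] at ht
    have htp : t ≠ p := by
      intro h; rw [h] at ht; omega
    classical
    set D : ℕ → Prop := fun j => ∃ v : G.Wcheck,
      w = v * cs2.wordProd (alternatingWord p t j) ∧ cs2.length v + j = n with hDdef
    have hD0 : D 0 := by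
      refine ⟨w, ?_, by omega⟩
      show w = w * cs2.wordProd []
      rw [cs2.wordProd_nil, mul_one]
    have hex : ∃ k, k ≤ n ∧ D k ∧ ∀ j, k < j → j ≤ n → ¬ D j := by
      refine ⟨Nat.findGreatest D n, Nat.findGreatest_le n,
        Nat.findGreatest_spec (Nat.zero_le n) hD0, fun j h1 h2 => ?_⟩
      exact Nat.findGreatest_is_greatest h1 h2
    obtain ⟨k, hkn, hkD, hkmax⟩ := hex
    obtain ⟨v, hvw, hvlen⟩ := hkD
    -- C1 : no descent of v at p or t
    have hC1 : ∀ c : ι × S, (c = p ∨ c = t) → ¬ cs2.length (v * G.gen c) < cs2.length v := by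
      intro c hcpt hlt
      have hvc : cs2.length (v * G.gen c) + 1 = cs2.length v := by
        rcases hms v c with h | h
        · omega
        · exact h
      by_cases hcc : c = (if Even k then t else p)
      · -- extend the alternating word : contradiction with maximality
        have hknew : ¬ D (k + 1) := hkmax (k + 1) (by omega) (by omega)
        apply hknew
        refine ⟨v * G.gen c, ?_, by omega⟩
        rw [alternatingWord_succ' p t k, cs2.wordProd_cons, hsimple, ← hcc, mul_assoc,
          ← mul_assoc (G.gen c), G.gen_mul_gen_self, one_mul]
        exact hvw
      · -- c is the head of the alternating word : contradiction with length
        rcases Nat.eq_zero_or_pos k with hk0 | hk0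
        · -- k = 0 : then c = p and v = w
          have hveqw : v = w := by
            rw [hvw, hk0]
            show v = v * cs2.wordProd []
            rw [cs2.wordProd_nil, mul_one]
          have hcp : c = p := by
            rcases hcpt with h | h
            · exact h
            · exfalso; rw [hk0] at hcc; simp at hcc; exact hcc h
          rw [hveqw, hcp] at hlt
          omega
        · -- k ≥ 1 : c equals the head letter
          obtain ⟨k', rfl⟩ : ∃ k', k = k' + 1 := ⟨k - 1, by omega⟩
          have hhead : alternatingWord p t (k' + 1)
              = (if Even k' then t else p) :: alternatingWord p t k' :=
            alternatingWord_succ' p t k'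
          have hch : c = (if Even k' then t else p) := by
            have hpar : ¬ Even (k' + 1) ↔ Even k' := by simp [Nat.even_add_one]
            rcases hcpt with rfl | rfl <;> by_cases hk'' : Even k' <;>
              simp [hk'', Nat.even_add_one] at hcc ⊢ <;> tauto
          have hw2 : w = (v * G.gen c) * cs2.wordProd (alternatingWord p t k') := by
            rw [hvw, hhead, cs2.wordProd_cons, hsimple, ← hch, ← mul_assoc]
          have hle := cs2.length_mul_le (v * G.gen c) (cs2.wordProd (alternatingWord p t k'))
          have hle2 := cs2.length_wordProd_le (alternatingWord p t k')
          rw [length_alternatingWord] at hle2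
          rw [← hw2] at hle
          omega
    -- k ≥ 1
    have hk1 : 1 ≤ k := by
      by_contra hk0
      have hk0' : k = 0 := by omega
      have hveqw : v = w := by
        rw [hvw, hk0']
        show v = v * cs2.wordProd []
        rw [cs2.wordProd_nil, mul_one]
      exact hC1 t (Or.inr rfl) (by rw [hveqw]; exact ht)
    have hvp : cs2.length (v * G.gen p) = cs2.length v + 1 := by
      rcases hms v p with h | h
      · exact h
      · exact absurd (by omega) (hC1 p (Or.inl rfl))
    have hvt : cs2.length (v * G.gen t) = cs2.length v + 1 := by
      rcases hms v t with h | h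
      · exact h
      · exact absurd (by omega) (hC1 t (Or.inr rfl))
    have hlv : cs2.length v < n := by omega
    -- reducedness of the alternating word extended by p
    have hredw : cs2.length (cs2.wordProd (alternatingWord t p (k + 1))) = k + 1 := by
      have h1 : alternatingWord t p (k + 1) = (alternatingWord p t k).concat p :=
        alternatingWord_succ t p k
      rw [h1, cs2.wordProd_concat, hsimple]
      have hub : cs2.length (cs2.wordProd (alternatingWord p t k) * G.gen p)
          ≤ k + 1 := by
        have h2 := cs2.length_wordProd_le (alternatingWord p t k)
        rw [length_alternatingWord] at h2
        rcases hms (cs2.wordProd (alternatingWord p t k)) p with h | h <;> omega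
      have hlb : n + 1 ≤ cs2.length v
          + cs2.length (cs2.wordProd (alternatingWord p t k) * G.gen p) := by
        have h3 : w * G.gen p
            = v * (cs2.wordProd (alternatingWord p t k) * G.gen p) := by
          rw [hvw, mul_assoc]
        have h4 := cs2.length_mul_le v
          (cs2.wordProd (alternatingWord p t k) * G.gen p)
        rw [← h3, hwp] at h4
        exact h4
      omega
    obtain ⟨c, d, hc, hd, hcd, hval⟩ :=
      G.dihedral rhoF hrhoF cs2 hsimple hM2 p t htp.symm k hredw
    have hsplit : rhoF w⁻¹ Z
        = rhoF (cs2.wordProd (alternatingWord p t k))⁻¹ (rhoF v⁻¹ Z) := by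
      rw [hvw, mul_inv_rev, rho_mul_apply G rhoF]
    rw [hsplit, hval]
    have h1 : 0 < rhoF v⁻¹ Z p := ih (cs2.length v) hlv v p rfl hvp Z hZ
    have h2 : 0 < rhoF v⁻¹ Z t := ih (cs2.length v) hlv v t rfl hvt Z hZ
    nlinarith [mul_nonneg hc h1.le, mul_nonneg hd h2.le, mul_pos h1 h2]

include hrhoF hsimple hM2 in
/-- Nonvanishing : the image of a strictly positive functional under any group element never
vanishes at any coordinate. -/
lemma nonvanish (h : G.Wcheck) (Y : (ι × S) → ℝ) (hY : ∀ q, 0 < Y q) (p : ι × S) :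
    rhoF h Y p ≠ 0 := by
  set w := h⁻¹ with hwdef
  have hinv : w⁻¹ = h := by rw [hwdef, inv_inv]
  have hms := cs2.length_mul_simple w p
  have hne := cs2.length_mul_simple_ne w p
  rw [hsimple] at hms hne
  rcases hms with hcase | hcase
  · have := G.posS rhoF hrhoF cs2 hsimple hM2 (cs2.length w) w p rfl hcase Y hY
    rw [hinv] at this
    exact ne_of_gt this
  · -- descent case : apply to w * gen p
    have hlpos : 0 < cs2.length w := by omega
    set w' := w * G.gen p with hw'def
    have hw'p : cs2.length (w' * G.gen p) = cs2.length w' + 1 := by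
      have : w' * G.gen p = w := by
        rw [hw'def, mul_assoc, G.gen_mul_gen_self, mul_one]
      rw [this]
      omega
    have hpos := G.posS rhoF hrhoF cs2 hsimple hM2 (cs2.length w') w' p rfl hw'p Y hY
    have hw'inv : w'⁻¹ = G.gen p * h := by
      rw [hw'def, mul_inv_rev, G.gen_inv, hinv]
    rw [hw'inv, rho_mul_apply G rhoF, hrhoF, G.rcheck_diag] at hpos
    intro hzero
    rw [hzero] at hpos
    norm_num at hpos

end GeomSetting
end AuxDev4
section AuxDev5
open CoxeterSystem
variable {R : Type*} [Ring R] {ι : Type*} [Fintype ι] [DecidableEq ι]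
  {S : Type*} [Fintype S] [DecidableEq S] {W : Type*} [Group W]

namespace GeomSetting
variable (G : GeomSetting R ι S W)

lemma gen_comm {p q : ι × S} (hne : p ≠ q) (h2 : p.2 = q.2) :
    Commute (G.gen p) (G.gen q) := by
  have h0 : G.rcheck p q = 0 := G.rcheck_of_ne_same hne h2
  have hm : G.mcheck p q = 2 := by simp [GeomSetting.mcheck, hne, h0]
  have hrel := G.gen_mul_gen_pow p q
  rw [hm] at hrel
  have h1 : (G.gen p * G.gen q) * (G.gen p * G.gen q) = 1 := by rwa [pow_two] at hrel
  have h2' : (G.gen p * G.gen q)⁻¹ = G.gen p * G.gen q :=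
    (eq_inv_of_mul_eq_one_right h1).symm
  have h3 : G.gen q * G.gen p = G.gen p * G.gen q := by
    rw [← G.gen_inv p, ← G.gen_inv q, ← mul_inv_rev, G.gen_inv, G.gen_inv, h2']
  exact h3.symm

/-- Pairwise commutation of the generators `(i, s)` for a fixed `s`. -/
lemma gcomm (s : S) (F : Finset ι) :
    (↑F : Set ι).Pairwise (Function.onFun Commute (fun i => G.gen (i, s))) := by
  intro a _ b _ hab
  exact G.gen_comm (by simp [hab]) rfl

variable (rhoF : G.Wcheck →* (((ι × S) → ℝ) ≃ₗ[ℝ] ((ι × S) → ℝ)))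
  (hrhoF : ∀ (p : ι × S) (Z : (ι × S) → ℝ) (q : ι × S),
    rhoF (G.gen p) Z q = Z q - (G.rcheck p q : ℝ) * Z p)

include hrhoF in
lemma genProd_apply (s : S) (F : Finset ι) :
    ∀ (Y : (ι × S) → ℝ) (q : ι × S),
      rhoF (F.noncommProd (fun i => G.gen (i, s)) (G.gcomm s F)) Y q
        = Y q - ∑ i ∈ F, (G.rcheck (i, s) q : ℝ) * Y (i, s) := by
  classical
  induction F using Finset.induction_on with
  | empty => intro Y q; simp
  | @insert a F ha ih =>
    intro Y q
    rw [Finset.noncommProd_insert_of_notMem _ _ _ _ ha, rho_mul_apply G rhoF, hrhoF,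
      ih, ih, Finset.sum_insert ha]
    have hz : ∑ i ∈ F, (G.rcheck (i, s) (a, s) : ℝ) * Y (i, s) = 0 := by
      refine Finset.sum_eq_zero fun i hi => ?_
      have hia : i ≠ a := fun h => ha (h ▸ hi)
      have : G.rcheck (i, s) (a, s) = 0 :=
        G.rcheck_of_ne_same (fun h => hia (congrArg Prod.fst h)) rfl
      rw [this]; norm_num
    rw [hz]
    ring

lemma FP_sum (x : R) : ∑ i, (G.FD.b.repr x i : ℝ) * G.FP (G.FD.b i) = G.FP x := by
  conv_rhs => rw [← G.FD.b.sum_repr x]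
  rw [map_sum]
  exact Finset.sum_congr rfl fun i _ => by rw [map_zsmul, zsmul_eq_mul]

variable (rhoE : W →* ((S → ℝ) ≃ₗ[ℝ] (S → ℝ)))
  (hrhoE : ∀ (s : S) (Z : S → ℝ) (t : S),
    rhoE (G.cs.simple s) Z t = Z t - G.FP (G.cartan s t) * Z s)

include hrhoF hrhoE in
lemma intertwine_simple (s : S) (Z : S → ℝ) :
    G.emb (rhoE (G.cs.simple s) Z)
      = rhoF (Finset.univ.noncommProd (fun i => G.gen (i, s)) (G.gcomm s Finset.univ))
          (G.emb Z) := by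
  funext q
  obtain ⟨j, t⟩ := q
  rw [G.genProd_apply rhoF hrhoF]
  show G.FP (G.FD.b j) * (rhoE (G.cs.simple s) Z) t = _
  rw [hrhoE]
  by_cases hts : t = s
  · subst hts
    have hsum : ∑ i, (G.rcheck (i, t) (j, t) : ℝ) * G.emb Z (i, t)
        = 2 * (G.FP (G.FD.b j) * Z t) := by
      rw [Finset.sum_eq_single j]
      · rw [G.rcheck_diag]; push_cast; rfl
      · intro i _ hij
        have h0 : G.rcheck (i, t) (j, t) = 0 :=
          G.rcheck_of_ne_same (fun h => hij (congrArg Prod.fst h)) rfl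
        rw [h0]; norm_num
      · intro h; exact absurd (Finset.mem_univ j) h
    rw [hsum]
    have hc2 : G.cartan t t = 2 := G.cartan_diag t
    rw [hc2, map_ofNat]
    show G.FP (G.FD.b j) * (Z t - 2 * Z t) = G.FP (G.FD.b j) * Z t - 2 * (G.FP (G.FD.b j) * Z t)
    ring
  · have hrc : ∀ i, G.rcheck (i, s) (j, t)
        = G.FD.b.repr (G.FD.b j * G.cartan s t) i := by
      intro i
      rw [GeomSetting.rcheck, if_neg]
      exact fun h => hts (h.symm)
    have hsum : ∑ i, (G.rcheck (i, s) (j, t) : ℝ) * G.emb Z (i, s)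
        = G.FP (G.FD.b j) * G.FP (G.cartan s t) * Z s := by
      have : ∀ i, (G.rcheck (i, s) (j, t) : ℝ) * G.emb Z (i, s)
          = ((G.FD.b.repr (G.FD.b j * G.cartan s t) i : ℝ) * G.FP (G.FD.b i)) * Z s := by
        intro i
        rw [hrc i]
        show _ = _
        unfold GeomSetting.emb
        ring
      rw [Finset.sum_congr rfl fun i _ => this i, ← Finset.sum_mul, G.FP_sum, map_mul]
    rw [hsum]
    show G.FP (G.FD.b j) * (Z t - G.FP (G.cartan s t) * Z s)
      = G.FP (G.FD.b j) * Z t - G.FP (G.FD.b j) * G.FP (G.cartan s t) * Z s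
    ring

include hrhoF hrhoE in
lemma intertwine (w : W) :
    ∃ g : G.Wcheck, ∀ Z : S → ℝ, G.emb (rhoE w Z) = rhoF g (G.emb Z) := by
  induction w using G.cs.simple_induction with
  | simple s =>
    exact ⟨_, fun Z => G.intertwine_simple rhoF hrhoF rhoE hrhoE s Z⟩
  | one => exact ⟨1, fun Z => by rw [map_one, map_one]; rfl⟩
  | mul w w' hw hw' =>
    obtain ⟨g, hg⟩ := hw
    obtain ⟨g', hg'⟩ := hw'
    refine ⟨g * g', fun Z => ?_⟩
    have : rhoE (w * w') Z = rhoE w (rhoE w' Z) := by rw [map_mul]; rfl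
    rw [this, hg, hg', rho_mul_apply G rhoF]

end GeomSetting
end AuxDev5
section AuxDev6
variable {R : Type*} [Ring R] {ι : Type*} [Fintype ι] [DecidableEq ι]
  {S : Type*} [Fintype S] [DecidableEq S] {W : Type*} [Group W]

/-- The unfolded Coxeter matrix, packaged as a `CoxeterMatrix`. -/
def GeomSetting.toCoxMat (G : GeomSetting R ι S W)
    (hsymm : ∀ p q : ι × S, G.mcheck p q = G.mcheck q p)
    (hoff : ∀ p q : ι × S, p ≠ q → G.mcheck p q ≠ 1) : CoxeterMatrix (ι × S) where
  M := fun p q => G.mcheck p q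
  isSymm := by ext p q; exact hsymm q p
  diagonal := fun p => G.mcheck_diag p
  off_diagonal := hoff

/-- The Coxeter system on the unfolded group `W̌`. -/
def GeomSetting.toCoxSys (G : GeomSetting R ι S W)
    (hsymm : ∀ p q : ι × S, G.mcheck p q = G.mcheck q p)
    (hoff : ∀ p q : ι × S, p ≠ q → G.mcheck p q ≠ 1) :
    CoxeterSystem (G.toCoxMat hsymm hoff) G.Wcheck :=
  ⟨MulEquiv.refl _⟩

lemma GeomSetting.toCoxSys_simple (G : GeomSetting R ι S W)
    (hsymm : ∀ p q : ι × S, G.mcheck p q = G.mcheck q p)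
    (hoff : ∀ p q : ι × S, p ≠ q → G.mcheck p q ≠ 1) (p : ι × S) :
    (G.toCoxSys hsymm hoff).simple p = G.gen p := rfl

end AuxDev6

/-- **Lemma (points of `Ǎ`-hyperplanes in the Tits cone lie on `A`-hyperplanes).**
If `Ȟ ∈ Ǎ` and `x ∈ Hom_R(RΛ_S, ℝ)` satisfies `x ∈ Ȟ` and `x ∈ T`, then `x` lies on some
hyperplane `H ∈ A`. -/
theorem point_on_unfolded_hyperplane (G : GeomSetting R ι S W)
    (rhoE : W →* ((S → ℝ) ≃ₗ[ℝ] (S → ℝ)))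
    (hrhoE : ∀ (s : S) (Z : S → ℝ) (t : S),
      rhoE (G.cs.simple s) Z t = Z t - G.FP (G.cartan s t) * Z s)
    (rhoF : G.Wcheck →* (((ι × S) → ℝ) ≃ₗ[ℝ] ((ι × S) → ℝ)))
    (hrhoF : ∀ (p : ι × S) (Z : (ι × S) → ℝ) (q : ι × S),
      rhoF (G.gen p) Z q = Z q - (G.rcheck p q : ℝ) * Z p)
    (Hc : Set ((ι × S) → ℝ)) (hHc : Hc ∈ hypSys rhoF)
    (x : S → ℝ) (hxH : G.emb x ∈ Hc) (hxT : x ∈ titsT rhoE) :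
    ∃ H ∈ hypSys rhoE, x ∈ H := by
  classical
  obtain ⟨w, hw⟩ := Set.mem_iUnion.mp hxT
  obtain ⟨Z, hZC, hZx⟩ := hw
  by_cases hzero : ∃ t0, Z t0 = 0
  · obtain ⟨t0, ht0⟩ := hzero
    exact ⟨rhoE w '' wallH S t0, ⟨w, t0, rfl⟩, ⟨Z, ht0, hZx⟩⟩
  · exfalso
    push_neg at hzero
    have hpos : ∀ t0, 0 < Z t0 := fun t0 => lt_of_le_of_ne (hZC t0) (Ne.symm (hzero t0))
    obtain ⟨g, pq, rfl⟩ := hHc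
    obtain ⟨Y0, hY0, hY0x⟩ := hxH
    -- set up the unfolded Coxeter system
    have hsymm := G.mcheck_symm rhoF hrhoF
    have hoff : ∀ p q : ι × S, p ≠ q → G.mcheck p q ≠ 1 := fun p q hne => G.mcheck_off hne
    set cs2 := G.toCoxSys hsymm hoff with hcs2
    have hsimple : ∀ p : ι × S, cs2.simple p = G.gen p := fun p => rfl
    have hM2 : ∀ p q : ι × S, (G.toCoxMat hsymm hoff) p q = G.mcheck p q := fun p q => rfl
    -- intertwining
    obtain ⟨gw, hgw⟩ := G.intertwine rhoF hrhoF rhoE hrhoE w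
    -- the vanishing coordinate
    have hvan : rhoF (g⁻¹ * gw) (G.emb Z) pq = 0 := by
      rw [GeomSetting.rho_mul_apply G rhoF, ← hgw]
      have hembx : G.emb (rhoE w Z) = G.emb x := by rw [hZx]
      rw [hembx, ← hY0x, ← GeomSetting.rho_mul_apply G rhoF, inv_mul_cancel, map_one]
      exact hY0
    -- strict positivity of the embedded point
    have hembpos : ∀ q : ι × S, 0 < G.emb Z q := by
      intro q
      exact mul_pos (lt_of_lt_of_le zero_lt_one (G.FP_basis q.1)) (hpos q.2)
    exact G.nonvanish rhoF hrhoF cs2 hsimple hM2 (g⁻¹ * gw) (G.emb Z) hembpos pq hvan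


end
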